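/- For every prime p with p \equiv \epsilon mod 3 (\epsilon = \pm 1), one has \sum_{k=0}^{p-1} \binom{2k}{k} \equiv \epsilon mod p^2. -/

import Mathlib

open Finset

/-- Period-3 coefficient sequence `0, 1, -1, 0, 1, -1, ...`. -/
def cc (r : ℕ) : ℤ := if r % 3 = 1 then 1 else if r % 3 = 2 then -1 else 0

lemma cc_add_three (r : ℕ) : cc (r + 3) = cc r := by
  simp [cc, Nat.add_mod_right]

lemma cc_cycle (r : ℕ) : cc (r + 1) + cc (r + 2) = - cc r := by
  have h : r % 3 = 0 ∨ r % 3 = 1 ∨ r % 3 = 2 := by omega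
  rcases h with h | h | h <;>
    simp [cc, h, show (r+1) % 3 = (r%3+1)%3 from by omega,
      show (r+2) % 3 = (r%3+2)%3 from by omega]
lemma idB (n : ℕ) :
    ∑ k ∈ Finset.range n, ((2*k).choose k : ℤ)
      = ∑ r ∈ Finset.range (n+2), cc r * ((2*n).choose (n+r) : ℤ) := by
  induction n with
  | zero =>
      simp [Finset.sum_range_succ, cc]
  | succ n ih =>
      rw [Finset.sum_range_succ, ih]
      have pasc2 : ∀ m k : ℕ, ((m+2).choose (k+2) : ℤ)
          = (m.choose k : ℤ) + 2 * (m.choose (k+1) : ℤ) + (m.choose (k+2) : ℤ) := by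
        intro m k
        rw [show m+2 = (m+1)+1 from rfl, show k+2 = (k+1)+1 from rfl,
          Nat.choose_succ_succ (m+1) (k+1), Nat.choose_succ_succ m k,
          Nat.choose_succ_succ m (k+1)]
        push_cast; ring
      set A : ℕ → ℤ := fun t => ((2*n).choose (n+t) : ℤ) with hA
      have hAzero : ∀ t, 2*n < n + t → A t = 0 := by
        intro t ht
        simp only [hA]
        rw [Nat.choose_eq_zero_of_lt ht]; norm_num
      have step : ∑ r ∈ Finset.range (n+3), cc r * ((2*(n+1)).choose ((n+1)+r) : ℤ)
          = ∑ s ∈ Finset.range (n+2),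
              (cc (s+1) * A s + 2 * (cc (s+1) * A (s+1)) + cc (s+1) * A (s+2)) := by
        rw [Finset.sum_range_succ' (fun r => cc r * ((2*(n+1)).choose ((n+1)+r) : ℤ)) (n+2)]
        have h0 : cc 0 = 0 := by simp [cc]
        simp only [h0, zero_mul, add_zero]
        refine Finset.sum_congr rfl fun s _ => ?_
        rw [show 2*(n+1) = 2*n+2 from by ring, show (n+1)+(s+1) = (n+s)+2 from by ring,
          pasc2 (2*n) (n+s)]
        rw [show n + s + 1 = n + (s+1) from by ring, show n + s + 2 = n + (s+2) from by ring]
        simp only [hA]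
        ring
      rw [step, Finset.sum_add_distrib, Finset.sum_add_distrib]
      have hB : ∑ s ∈ Finset.range (n+2), (2 : ℤ) * (cc (s+1) * A (s+1))
          = 2 * ∑ r ∈ Finset.range (n+2), cc r * A r := by
        rw [← Finset.mul_sum]
        congr 1
        have e := Finset.sum_range_succ' (fun t => cc t * A t) (n+2)
        have htop := Finset.sum_range_succ (fun t => cc t * A t) (n+2)
        rw [htop, hAzero (n+2) (by omega)] at e
        have h0 : cc 0 = 0 := by simp [cc]
        rw [h0] at e
        simp only [mul_zero, zero_mul, add_zero] at e
        exact e.symm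
      have hC : ∑ s ∈ Finset.range (n+2), cc (s+1) * A (s+2)
          = ∑ r ∈ Finset.range (n+2), cc (r+2) * A r + A 0 := by
        have e1 := Finset.sum_range_succ' (fun t => cc (t+2) * A t) (n+3)
        have e2 := Finset.sum_range_succ' (fun s => cc (s+1+2) * A (s+1)) (n+2)
        have etop1 := Finset.sum_range_succ (fun t => cc (t+2) * A t) (n+3)
        have etop2 := Finset.sum_range_succ (fun t => cc (t+2) * A t) (n+2)
        rw [etop1, etop2, hAzero (n+3) (by omega), hAzero (n+2) (by omega)] at e1
        have h1 : ∀ s : ℕ, cc (s+1+1+2) * A (s+1+1) = cc (s+1) * A (s+2) := by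
          intro s
          rw [show s+1+1+2 = (s+1)+3 from by omega, cc_add_three,
            show s+1+1 = s+2 from by omega]
        simp only [h1] at e2
        have h2 : cc (0+1+2) = 0 := by simp [cc]
        have h3 : cc (0+2) = -1 := by simp [cc]
        rw [h2] at e2
        rw [h3] at e1
        rw [e2] at e1
        simp only [mul_zero, zero_mul, add_zero] at e1
        linarith [e1]
      rw [hB, hC]
      have hAC : ∑ s ∈ Finset.range (n+2), cc (s+1) * A s
            + ∑ r ∈ Finset.range (n+2), cc (r+2) * A r
          = - ∑ r ∈ Finset.range (n+2), cc r * A r := by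
        rw [← Finset.sum_add_distrib, ← Finset.sum_neg_distrib]
        refine Finset.sum_congr rfl fun r _ => ?_
        rw [← add_mul, cc_cycle r, neg_mul]
      have hA0 : A 0 = ((2*n).choose n : ℤ) := by simp [hA]
      linarith [hAC]

def FF (j n : ℕ) : ℤ := ∑ r ∈ Finset.range (n+1), cc (r+j) * (n.choose r : ℤ)

lemma FF_succ (j n : ℕ) : FF j (n+1) = FF j n + FF (j+1) n := by
  unfold FF
  rw [Finset.sum_range_succ' (fun r => cc (r+j) * ((n+1).choose r : ℤ)) (n+1)]
  show _ = _
  have pointwise : ∀ s : ℕ, cc (s+1+j) * (((n+1).choose (s+1) : ℕ) : ℤ)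
      = cc (s+(j+1)) * (n.choose s : ℤ) + cc (s+1+j) * (n.choose (s+1) : ℤ) := by
    intro s
    rw [Nat.choose_succ_succ n s, show s+(j+1) = s+1+j from by omega]
    push_cast; ring
  rw [Finset.sum_congr rfl (fun s _ => pointwise s), Finset.sum_add_distrib]
  have e := Finset.sum_range_succ' (fun t => cc (t+j) * (n.choose t : ℤ)) n
  have etop := Finset.sum_range_succ (fun t => cc (t+j) * (n.choose t : ℤ)) (n+1)
  -- etop : ∑_{t<n+2} = ∑_{t<n+1} + cc (n+1+j) * C(n, n+1)
  rw [Nat.choose_succ_self] at etop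
  simp only [Nat.cast_zero, mul_zero, add_zero] at etop
  -- goal : ∑_{s<n+1} cc(s+(j+1)) C(n,s) + ∑_{s<n+1} cc(s+1+j) C(n,s+1) + cc(0+j) * C(n+1,0)
  have e2 : ∑ s ∈ Finset.range (n+1), cc (s+1+j) * (n.choose (s+1) : ℤ)
      = ∑ t ∈ Finset.range (n+1), cc (t+j) * (n.choose t : ℤ) - cc (0+j) * (n.choose 0 : ℤ) := by
    have e3 := Finset.sum_range_succ' (fun t => cc (t+j) * (n.choose t : ℤ)) (n+1)
    rw [etop] at e3
    have : ∀ s:ℕ, cc (s+1+j) * ((n.choose (s+1) : ℕ) : ℤ) = cc (s+1+j) * (n.choose (s+1) : ℤ) := fun s => rfl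
    linarith [e3]
  rw [e2]
  simp only [Nat.choose_zero_right, Nat.cast_one, mul_one]
  ring

lemma FF_three (n : ℕ) : FF 3 n = FF 0 n := by
  unfold FF
  refine Finset.sum_congr rfl fun r _ => ?_
  rw [cc_add_three, Nat.add_zero]

def pat (m : ℕ) : ℤ × ℤ × ℤ :=
  if m = 0 then (0,1,-1) else if m = 1 then (1,0,-1) else if m = 2 then (1,-1,0)
  else if m = 3 then (0,-1,1) else if m = 4 then (-1,0,1) else (-1,1,0)

lemma FF_pat (n : ℕ) : (FF 0 n, FF 1 n, FF 2 n) = pat (n % 6) := by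
  induction n with
  | zero =>
      unfold FF pat
      norm_num [cc]
  | succ n ih =>
      rw [FF_succ, FF_succ, FF_succ, FF_three]
      rw [Prod.ext_iff, Prod.ext_iff] at ih ⊢
      simp only at ih ⊢
      have h : n % 6 = 0 ∨ n % 6 = 1 ∨ n % 6 = 2 ∨ n % 6 = 3 ∨ n % 6 = 4 ∨ n % 6 = 5 := by omega
      rcases h with h | h | h | h | h | h <;>
        rw [h] at ih <;>
        rw [show (n+1) % 6 = (n % 6 + 1) % 6 from by omega, h] <;>
        simp [pat] at ih ⊢ <;>
        obtain ⟨h0, h1, h2⟩ := ih <;>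
        rw [h0, h1, h2] <;>
        norm_num

lemma keycong {p : ℕ} (hp : p.Prime) {r : ℕ} (h1 : 1 ≤ r) (h2 : r < p) :
    ((p:ℤ))^2 ∣ ((2*p).choose (p+r) : ℤ) - 2 * (p.choose r : ℤ) := by
  haveI : Fact p.Prime := ⟨hp⟩
  obtain ⟨s, rfl⟩ : ∃ s, r = s + 1 := ⟨r - 1, by omega⟩
  obtain ⟨q, rfl⟩ : ∃ q, p = q + 1 := ⟨p - 1, by omega⟩
  have hs : s < q := by omega
  -- Lucas for C(2q+1, q+s+1)
  have hL1 := Choose.choose_modEq_choose_mod_mul_choose_div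
    (n := 2*q+1) (k := q+s+1) (p := q+1)
  have hm1 : (2*q+1) % (q+1) = q := by
    rw [show 2*q+1 = q + (q+1) from by ring, Nat.add_mod_right, Nat.mod_eq_of_lt (by omega)]
  have hd1 : (2*q+1) / (q+1) = 1 := by
    rw [show 2*q+1 = q + (q+1) from by ring, Nat.add_div_right _ (by omega),
      Nat.div_eq_of_lt (by omega)]
  have hm2 : (q+s+1) % (q+1) = s := by
    rw [show q+s+1 = s + (q+1) from by ring, Nat.add_mod_right, Nat.mod_eq_of_lt (by omega)]
  have hd2 : (q+s+1) / (q+1) = 1 := by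
    rw [show q+s+1 = s + (q+1) from by ring, Nat.add_div_right _ (by omega),
      Nat.div_eq_of_lt (by omega)]
  rw [hm1, hd1, hm2, hd2, Nat.choose_one_right] at hL1
  -- hL1 : C(2q+1, q+s+1) ≡ C(q,s) * 1 [ZMOD q+1]
  -- Lucas for C(2q+2, q+s+2)
  have hL2 := Choose.choose_modEq_choose_mod_mul_choose_div
    (n := 2*q+2) (k := q+s+2) (p := q+1)
  have hm3 : (2*q+2) % (q+1) = 0 := by
    rw [show 2*q+2 = (q+1)*2 from by ring, Nat.mul_mod_right]
  have hd3 : (2*q+2) / (q+1) = 2 := by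
    rw [show 2*q+2 = (q+1)*2 from by ring, Nat.mul_div_cancel_left _ (by omega)]
  have hm4 : (q+s+2) % (q+1) = s+1 := by
    rw [show q+s+2 = (s+1) + (q+1) from by ring, Nat.add_mod_right, Nat.mod_eq_of_lt (by omega)]
  have hd4 : (q+s+2) / (q+1) = 1 := by
    rw [show q+s+2 = (s+1) + (q+1) from by ring, Nat.add_div_right _ (by omega),
      Nat.div_eq_of_lt (by omega)]
  rw [hm3, hd3, hm4, hd4, Nat.choose_zero_succ] at hL2
  -- hL2 : C(2q+2, q+s+2) ≡ 0 * C(2,1) [ZMOD q+1]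
  obtain ⟨t, ht⟩ : ∃ t : ℤ, ((2*q+1).choose (q+s+1) : ℤ) = (q.choose s : ℤ) + (q+1) * t := by
    have := hL1.dvd
    obtain ⟨t, ht⟩ := this
    exact ⟨-t, by push_cast at ht ⊢; linarith⟩
  obtain ⟨u, hu⟩ : ∃ u : ℤ, ((2*q+2).choose (q+s+2) : ℤ) = (q+1) * u := by
    have := hL2.dvd
    obtain ⟨u, hu⟩ := this
    exact ⟨-u, by push_cast at hu ⊢; linarith⟩
  -- multiplicative identities
  have hA : ((2*q+2 : ℕ) : ℤ) * ((2*q+1).choose (q+s+1) : ℤ)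
      = ((2*q+2).choose (q+s+2) : ℤ) * ((q+s+2 : ℕ) : ℤ) := by
    have := Nat.add_one_mul_choose_eq (2*q+1) (q+s+1)
    push_cast [Nat.succ_eq_add_one] at this ⊢
    push_cast
    linarith [this]
  have hB : ((q+1 : ℕ) : ℤ) * (q.choose s : ℤ)
      = ((q+1).choose (s+1) : ℤ) * ((s+1 : ℕ) : ℤ) := by
    have := Nat.add_one_mul_choose_eq q s
    push_cast [Nat.succ_eq_add_one] at this ⊢
    linarith [this]
  push_cast at hA hB
  have key : ((s:ℤ)+1) * (((2*q+2).choose (q+s+2) : ℤ) - 2 * ((q+1).choose (s+1) : ℤ))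
      = ((q:ℤ)+1)^2 * (2*t - u) := by
    linear_combination (-1 : ℤ) * hA + 2 * hB + (2*((q:ℤ)+1)) * ht + (-((q:ℤ)+1)) * hu
  have hdvd : ((q:ℤ)+1)^2 ∣ ((s:ℤ)+1) * (((2*q+2).choose (q+s+2) : ℤ) - 2 * ((q+1).choose (s+1) : ℤ)) :=
    ⟨2*t - u, key⟩
  have hcop : IsCoprime (((q:ℤ)+1)^2) ((s:ℤ)+1) := by
    have hnat : Nat.Coprime (q+1) (s+1) := by
      refine (Nat.Prime.coprime_iff_not_dvd hp).mpr ?_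
      intro hd
      have := Nat.le_of_dvd (by omega) hd
      omega
    have hnat2 : Nat.Coprime ((q+1)^2) (s+1) := Nat.Coprime.pow_left 2 hnat
    have := Nat.isCoprime_iff_coprime.mpr hnat2
    push_cast at this
    convert this using 2 <;> push_cast <;> ring
  have := hcop.dvd_of_dvd_mul_left (by rwa [mul_comm] at hdvd)
  have hfin : ((2*(q+1)).choose ((q+1)+(s+1)) : ℤ) - 2 * ((q+1).choose (s+1) : ℤ)
      = ((2*q+2).choose (q+s+2) : ℤ) - 2 * ((q+1).choose (s+1) : ℤ) := by
    rw [show 2*(q+1) = 2*q+2 from by ring, show (q+1)+(s+1) = q+s+2 from by ring]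
  rw [hfin]
  push_cast
  exact this


/-- For any prime `p ≡ ε mod 3` with `ε = ±1`,
`∑_{k<p} binom(2k,k) ≡ ε mod p²` in the integers. -/
theorem stmt_15 (p : ℕ) (hp : p.Prime) (ε : ℤ) (hε : ε = 1 ∨ ε = -1)
    (hmod : (p : ℤ) ≡ ε [ZMOD 3]) :
    (p : ℤ) ^ 2 ∣ (∑ k ∈ Finset.range p, (Nat.choose (2 * k) k : ℤ)) - ε := by
  have hm : (p:ℤ) % 3 = ε % 3 := hmod
  have hcast : ((p % 3 : ℕ) : ℤ) = (p:ℤ) % 3 := Int.natCast_mod p 3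
  have h3 : (p % 3 = 1 ∧ ε = 1) ∨ (p % 3 = 2 ∧ ε = -1) := by
    rcases hε with h | h <;> subst h <;> [left; right] <;> constructor <;> omega
  by_cases hp2 : p = 2
  · subst hp2
    have hee : ε = -1 := by rcases h3 with ⟨h, he⟩ | ⟨h, he⟩ <;> omega
    subst hee
    norm_num [Finset.sum_range_succ]
  -- p is odd, p ≠ 3
  have hodd : p % 2 = 1 := Nat.odd_iff.mp (hp.odd_of_ne_two hp2)
  have h6 : p % 6 = 1 ∨ p % 6 = 5 := by rcases h3 with ⟨h, _⟩ | ⟨h, _⟩ <;> omega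
  rw [idB p]
  rw [show p+2 = (p+1)+1 from rfl, Finset.sum_range_succ, Finset.sum_range_succ]
  have hz : ((2*p).choose (p+(p+1)) : ℤ) = 0 := by
    rw [Nat.choose_eq_zero_of_lt (by omega)]; norm_num
  have hself : ((2*p).choose (p+p) : ℤ) = 1 := by
    rw [show p+p = 2*p from by ring, Nat.choose_self]; norm_num
  have hccp : cc p = ε := by
    rcases h3 with ⟨h, he⟩ | ⟨h, he⟩ <;> subst he <;> simp [cc, h]
  rw [hz, hself, hccp]
  have hred : (∑ r ∈ Finset.range p, cc r * ((2*p).choose (p+r) : ℤ)) + ε * 1 + cc (p+1) * 0 - ε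
      = ∑ r ∈ Finset.range p, cc r * ((2*p).choose (p+r) : ℤ) := by ring
  rw [hred]
  have hsplit : ∑ r ∈ Finset.range p, cc r * ((2*p).choose (p+r) : ℤ)
      = (∑ r ∈ Finset.range p, cc r * (((2*p).choose (p+r) : ℤ) - 2 * (p.choose r : ℤ)))
        + 2 * ∑ r ∈ Finset.range p, cc r * (p.choose r : ℤ) := by
    rw [Finset.mul_sum, ← Finset.sum_add_distrib]
    exact Finset.sum_congr rfl fun r _ => by ring
  have hF0 : FF 0 p = ε := by
    have hpat := FF_pat p
    rcases h6 with h | h <;> rw [h] at hpat <;>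
      rcases h3 with ⟨hh, he⟩ | ⟨hh, he⟩ <;> subst he <;> simp [pat] at hpat <;>
      first
        | exact hpat.1
        | omega
  have hzero : ∑ r ∈ Finset.range p, cc r * (p.choose r : ℤ) = 0 := by
    have e : FF 0 p = (∑ r ∈ Finset.range p, cc (r+0) * (p.choose r : ℤ))
        + cc (p+0) * (p.choose p : ℤ) := Finset.sum_range_succ _ p
    simp only [Nat.add_zero, Nat.choose_self, Nat.cast_one, mul_one] at e
    rw [hF0, hccp] at e
    linarith [e]
  rw [hsplit, hzero, mul_zero, add_zero]
  refine Finset.dvd_sum fun r hr => ?_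
  rcases Nat.eq_zero_or_pos r with rfl | hr1
  · have : cc 0 = 0 := by simp [cc]
    rw [this, zero_mul]
    exact dvd_zero _
  · exact Dvd.dvd.mul_left (keycong hp hr1 (Finset.mem_range.mp hr)) (cc r)
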